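/- arXiv:2502.12919 — 4 statements merged into one kernel-verified Lean document; each statement's English description precedes it below -/
import Mathlib

section
/- The probability is strictly antitone on proper inclusions of flip sets when no branch probability equals 1/2: for Boolean sequences B₁, B₂ : Fin l → Bool, if F(B₁) is a proper subset of F(B₂) and pb u ≠ 1/2 for every u ∈ F(B₂) \ F(B₁), then P(B₂) < P(B₁). -/
open scoped Classical
open Finset

/-- The probability of a Boolean sequence `B`:
`P(B) = ∏ j, (if B j then pb j else 1 - pb j)`. -/
noncomputable def probSeq (l : ℕ) (pb : Fin l → ℝ) (B : Fin l → Bool) : ℝ :=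
  ∏ j, (if B j then pb j else 1 - pb j)

/-- The initial sequence `B⁰`, `B⁰ j = (pb j > 1/2)`. -/
noncomputable def initSeq (l : ℕ) (pb : Fin l → ℝ) : Fin l → Bool :=
  fun j => decide (pb j > 1 / 2)

/-- The flip set `F(B) = {j | B j ≠ B⁰ j}`. -/
noncomputable def flipSet (l : ℕ) (pb : Fin l → ℝ) (B : Fin l → Bool) : Finset (Fin l) :=
  Finset.univ.filter (fun j => B j ≠ initSeq l pb j)

/-- The flip ratio `V u = min (pb u) (1 - pb u) / max (pb u) (1 - pb u)`. -/
noncomputable def flipRatio (l : ℕ) (pb : Fin l → ℝ) (u : Fin l) : ℝ :=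
  min (pb u) (1 - pb u) / max (pb u) (1 - pb u)

/-- the probability is strictly antitone on proper inclusions of flip sets
when no branch probability on the difference equals `1/2`. -/
theorem probSeq_strict_antitone_flipSet (l : ℕ) (pb : Fin l → ℝ)
    (hpb : ∀ j, 0 < pb j ∧ pb j < 1) (B₁ B₂ : Fin l → Bool)
    (hss : flipSet l pb B₁ ⊂ flipSet l pb B₂)
    (hhalf : ∀ u ∈ flipSet l pb B₂ \ flipSet l pb B₁, pb u ≠ 1 / 2) :
    probSeq l pb B₂ < probSeq l pb B₁ := by
  obtain ⟨i, hi2, hi1⟩ := Finset.exists_of_ssubset hss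
  have hmem : ∀ j B, (j ∈ flipSet l pb B) ↔ B j ≠ initSeq l pb j := by
    intro j B; simp [flipSet]
  have hpos : ∀ j, (0:ℝ) < 1 - pb j := fun j => by linarith [(hpb j).2]
  apply Finset.prod_lt_prod
  · intro j _
    by_cases h : B₂ j <;> simp [h, (hpb j).1, hpos j]
  · intro j _
    by_cases hj1 : j ∈ flipSet l pb B₁
    · have hj2 : j ∈ flipSet l pb B₂ := hss.1 hj1
      rw [hmem] at hj1 hj2
      have : B₁ j = B₂ j := by
        cases h : initSeq l pb j <;> rw [h] at hj1 hj2 <;>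
          simp_all [Bool.not_eq_true]
      rw [this]
    · by_cases hj2 : j ∈ flipSet l pb B₂
      · -- flipped in B₂ only
        rw [hmem] at hj1 hj2
        push_neg at hj1
        by_cases h : initSeq l pb j
        · have hB1 : B₁ j = true := by rw [hj1, h]
          have hB2 : B₂ j = false := by rw [h] at hj2; simpa using hj2
          have hp : pb j > 1/2 := by simpa [initSeq] using h
          simp [hB1, hB2]; linarith
        · have hB1 : B₁ j = false := by rw [hj1]; simpa using h
          have hf : initSeq l pb j = false := by simpa using h
          rw [hf] at hj2
          have hB2 : B₂ j = true := Bool.ne_false_iff.mp hj2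
          have hp : ¬ pb j > 1/2 := by simpa [initSeq] using h
          simp [hB1, hB2]; linarith [not_lt.mp hp]
      · rw [hmem] at hj1 hj2
        push_neg at hj1 hj2
        rw [hj1, hj2]
  · refine ⟨i, Finset.mem_univ i, ?_⟩
    have hhi := hhalf i (Finset.mem_sdiff.mpr ⟨hi2, hi1⟩)
    rw [hmem] at hi1 hi2
    push_neg at hi1
    by_cases h : initSeq l pb i
    · have hB1 : B₁ i = true := by rw [hi1, h]
      have hB2 : B₂ i = false := by rw [h] at hi2; simpa using hi2
      have hp : pb i > 1/2 := by simpa [initSeq] using h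
      simp [hB1, hB2]; linarith
    · have hB1 : B₁ i = false := by rw [hi1]; simpa using h
      have hf : initSeq l pb i = false := by simpa using h
      rw [hf] at hi2
      have hB2 : B₂ i = true := Bool.ne_false_iff.mp hi2
      have hp : ¬ pb i > 1/2 := by simpa [initSeq] using h
      simp [hB1, hB2]
      have := not_lt.mp hp
      rcases lt_or_eq_of_le this with h' | h'
      · linarith
      · exact absurd h' hhi
end

section
/- (Theorem 1.) Assume the probability map P is injective on Boolean sequences. Let a ≥ 2 with a ≤ 2^l, and let S be a set of Boolean sequences of cardinality a − 1 that consists of the top a − 1 sequences in the sense that P(B') < P(B) for every B ∈ S and every B' ∉ S. Let B_a ∉ S be a sequence maximizing P among sequences not in S (the a-th top sequence). Then there exists B ∈ S such that F(B) ⊆ F(B_a) and the difference F(B_a) \ F(B) has exactly one element; that is, B_a is obtained from some top-(a−1) sequence by flipping exactly one position from its initial state, with no position transitioning from flipped back to initial. -/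
open scoped Classical
open Finset

lemma prob_pos (l : ℕ) (pb : Fin l → ℝ) (hpb : ∀ j, 0 < pb j ∧ pb j < 1)
    (B : Fin l → Bool) : 0 < probSeq l pb B := by
  apply Finset.prod_pos
  intro j _
  rcases hpb j with ⟨h1, h2⟩
  by_cases h : B j <;> simp [h] <;> linarith

lemma pb_ne_half (l : ℕ) (pb : Fin l → ℝ)
    (hinj : Function.Injective (probSeq l pb)) (u : Fin l) : pb u ≠ 1 / 2 := by
  intro h
  set B : Fin l → Bool := fun _ => true with hB
  set B' := Function.update B u false with hB'
  have hprob : probSeq l pb B' = probSeq l pb B := by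
    unfold probSeq
    apply Finset.prod_congr rfl
    intro j _
    by_cases hj : j = u
    · subst hj
      simp [hB', hB, Function.update_self, h]
      linarith
    · simp [hB', Function.update_of_ne hj]
  have := hinj hprob
  have := congrFun this u
  simp [hB', hB, Function.update_self] at this

lemma prob_le_init (l : ℕ) (pb : Fin l → ℝ) (hpb : ∀ j, 0 < pb j ∧ pb j < 1)
    (B : Fin l → Bool) : probSeq l pb B ≤ probSeq l pb (initSeq l pb) := by
  apply Finset.prod_le_prod
  · intro j _
    rcases hpb j with ⟨h1, h2⟩
    by_cases h : B j <;> simp [h] <;> linarith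
  · intro j _
    rcases hpb j with ⟨h1, h2⟩
    by_cases hi : (2:ℝ)⁻¹ < pb j <;> by_cases h : B j <;>
      simp [initSeq, h, hi, one_div] <;> linarith

lemma unflip_increases (l : ℕ) (pb : Fin l → ℝ) (hpb : ∀ j, 0 < pb j ∧ pb j < 1)
    (hinj : Function.Injective (probSeq l pb))
    (B : Fin l → Bool) (u : Fin l) (hu : B u ≠ initSeq l pb u) :
    probSeq l pb B < probSeq l pb (Function.update B u (initSeq l pb u)) := by
  rcases hpb u with ⟨h1, h2⟩
  have hne := pb_ne_half l pb hinj u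
  unfold probSeq
  rw [← Finset.mul_prod_erase Finset.univ _ (Finset.mem_univ u),
      ← Finset.mul_prod_erase Finset.univ
        (fun j => if Function.update B u (initSeq l pb u) j then pb j else 1 - pb j)
        (Finset.mem_univ u)]
  have hR : (∏ j ∈ Finset.univ.erase u, (if B j then pb j else 1 - pb j)) =
      ∏ j ∈ Finset.univ.erase u,
        (if Function.update B u (initSeq l pb u) j then pb j else 1 - pb j) := by
    apply Finset.prod_congr rfl
    intro j hj
    rw [Function.update_of_ne (Finset.mem_erase.mp hj).1]
  rw [← hR]
  have hRpos : 0 < ∏ j ∈ Finset.univ.erase u, (if B j then pb j else 1 - pb j) := by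
    apply Finset.prod_pos
    intro j _
    by_cases h : B j <;> simp [h] <;> linarith [(hpb j).1, (hpb j).2]
  apply mul_lt_mul_of_pos_right _ hRpos
  rw [Function.update_self]
  by_cases hi : (2:ℝ)⁻¹ < pb u
  · have hBu : B u = false := by
      simpa [initSeq, hi, one_div] using hu
    simp [initSeq, hi, hBu, one_div]
    linarith
  · have hlt : pb u < 2⁻¹ := lt_of_le_of_ne (not_lt.mp hi) (by
      intro h; exact hne (by rw [h]; norm_num))
    have hBu : B u = true := by
      simpa [initSeq, hi, one_div] using hu
    simp [initSeq, hi, hBu, one_div]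
    linarith

/-- Theorem 1: the `a`-th top sequence is obtained from some top-`(a-1)`
sequence by flipping exactly one position from its initial state, with no unflipping. -/
theorem ath_top_from_one_flip (l : ℕ) (pb : Fin l → ℝ)
    (hpb : ∀ j, 0 < pb j ∧ pb j < 1)
    (hinj : Function.Injective (probSeq l pb))
    (a : ℕ) (ha2 : 2 ≤ a) (hal : a ≤ 2 ^ l)
    (S : Finset (Fin l → Bool)) (hcard : S.card = a - 1)
    (htop : ∀ B ∈ S, ∀ B' ∉ S, probSeq l pb B' < probSeq l pb B)
    (Ba : Fin l → Bool) (hBa : Ba ∉ S)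
    (hmax : ∀ B' ∉ S, probSeq l pb B' ≤ probSeq l pb Ba) :
    ∃ B ∈ S, flipSet l pb B ⊆ flipSet l pb Ba ∧
      (flipSet l pb Ba \ flipSet l pb B).card = 1 := by
  -- flip set of Ba is nonempty
  have hSne : S.Nonempty := by
    rw [← Finset.card_pos, hcard]; omega
  have hFne : (flipSet l pb Ba).Nonempty := by
    by_contra h
    rw [Finset.not_nonempty_iff_eq_empty] at h
    have hBa0 : Ba = initSeq l pb := by
      funext j
      by_contra hj
      have : j ∈ flipSet l pb Ba := by simp [flipSet, hj]
      simp [h] at this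
    obtain ⟨B, hB⟩ := hSne
    have h1 := htop B hB Ba hBa
    have h2 := prob_le_init l pb hpb B
    rw [hBa0] at h1
    linarith
  obtain ⟨u, hu⟩ := hFne
  have huB : Ba u ≠ initSeq l pb u := by
    simpa [flipSet] using hu
  set B := Function.update Ba u (initSeq l pb u) with hBdef
  have hlt : probSeq l pb Ba < probSeq l pb B :=
    unflip_increases l pb hpb hinj Ba u huB
  have hBS : B ∈ S := by
    by_contra hBS
    exact absurd (hmax B hBS) (not_le.mpr hlt)
  have hflip : flipSet l pb B = (flipSet l pb Ba).erase u := by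
    ext j
    simp only [flipSet, Finset.mem_filter, Finset.mem_univ, true_and, Finset.mem_erase]
    constructor
    · intro hj
      have hju : j ≠ u := by
        intro hju; subst hju
        rw [hBdef, Function.update_self] at hj
        exact hj rfl
      rw [hBdef, Function.update_of_ne hju] at hj
      exact ⟨hju, hj⟩
    · intro ⟨hju, hj⟩
      rw [hBdef, Function.update_of_ne hju]
      exact hj
  refine ⟨B, hBS, ?_, ?_⟩
  · rw [hflip]; exact Finset.erase_subset _ _
  · rw [hflip]
    have : flipSet l pb Ba \ (flipSet l pb Ba).erase u = {u} := by
      ext j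
      simp only [Finset.mem_sdiff, Finset.mem_erase, Finset.mem_singleton]
      constructor
      · rintro ⟨hj, hj2⟩
        by_contra hju
        exact hj2 ⟨hju, hj⟩
      · rintro rfl
        exact ⟨hu, fun h => h.1 rfl⟩
    rw [this, Finset.card_singleton]
end

section
/- Top sets are downward closed under inclusion of flip sets: assume the probability map P is injective on Boolean sequences, and let S be a set of Boolean sequences such that P(B') < P(B) for every B ∈ S and every B' ∉ S. Then for all Boolean sequences B₁, B₂, if B₂ ∈ S and F(B₁) ⊆ F(B₂), then B₁ ∈ S. -/
open scoped Classical
open Finset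

/-- top sets are downward closed under inclusion of flip sets. -/
theorem top_set_downward_closed (l : ℕ) (pb : Fin l → ℝ)
    (hpb : ∀ j, 0 < pb j ∧ pb j < 1)
    (hinj : Function.Injective (probSeq l pb))
    (S : Set (Fin l → Bool))
    (htop : ∀ B ∈ S, ∀ B' ∉ S, probSeq l pb B' < probSeq l pb B) :
    ∀ B₁ B₂ : Fin l → Bool, B₂ ∈ S → flipSet l pb B₁ ⊆ flipSet l pb B₂ → B₁ ∈ S := by
  intro B₁ B₂ hB₂ hsub
  by_contra hB₁
  have hlt := htop B₂ hB₂ B₁ hB₁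
  have hle : probSeq l pb B₂ ≤ probSeq l pb B₁ := by
    unfold probSeq
    apply Finset.prod_le_prod
    · intro j _
      rcases hpb j with ⟨h0, h1⟩
      by_cases h : B₂ j <;> simp [h] <;> linarith
    · intro j _
      rcases hpb j with ⟨h0, h1⟩
      by_cases hB : B₁ j = B₂ j
      · simp [hB]
      · have hflip : B₁ j = initSeq l pb j := by
          by_contra hne
          have hj : j ∈ flipSet l pb B₁ := by
            simp [flipSet, hne]
          have hj2 := hsub hj
          simp only [flipSet, Finset.mem_filter] at hj2
          exact hB (by
            cases hb1 : B₁ j <;> cases hb2 : B₂ j <;> simp_all [initSeq]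
            <;> cases h : decide (pb j > 1/2) <;> simp_all)
        have hB₂ne : B₂ j ≠ initSeq l pb j := fun h => hB (hflip.trans h.symm)
        simp only [initSeq] at hflip hB₂ne
        by_cases hp : (2:ℝ)⁻¹ < pb j
        · simp [hp] at hflip hB₂ne
          simp [hflip, hB₂ne]; linarith
        · simp [hp] at hflip hB₂ne
          simp [hflip, hB₂ne]; linarith [not_lt.mp hp]
  linarith
end

section
/- (Correctness of the successor-based search.) Assume the probability map P is injective on Boolean sequences, and let S be a nonempty proper subset of the set of all Boolean sequences such that P(B') < P(B) for every B ∈ S and every B' ∉ S. Then the maximum of P over sequences not in S is attained at a one-flip successor of an element of S; precisely, the set T = { Function.update B u (¬ B u) | B ∈ S, u ∉ F(B), Function.update B u (¬ B u) ∉ S } is nonempty, and max_{B' ∉ S} P(B') = max_{B' ∈ T} P(B'), where each such successor satisfies P(Function.update B u (¬ B u)) = V u * P(B). -/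
open scoped Classical
open Finset

/-- The set of one-flip successors (at unflipped positions) of elements of `S`
that lie outside `S`. -/
noncomputable def succSet (l : ℕ) (pb : Fin l → ℝ) (S : Finset (Fin l → Bool)) :
    Finset (Fin l → Bool) :=
  Finset.univ.filter (fun C => C ∉ S ∧
    ∃ B ∈ S, ∃ u ∉ flipSet l pb B, C = Function.update B u (!B u))

lemma factor_pos {l : ℕ} {pb : Fin l → ℝ} (hpb : ∀ j, 0 < pb j ∧ pb j < 1)
    (B : Fin l → Bool) (j : Fin l) : 0 < (if B j then pb j else 1 - pb j) := by
  obtain ⟨h1, h2⟩ := hpb j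
  by_cases h : B j <;> simp [h] <;> linarith

lemma probSeq_update (l : ℕ) (pb : Fin l → ℝ) (B : Fin l → Bool) (u : Fin l) (b : Bool) :
    probSeq l pb (Function.update B u b)
      = (if b then pb u else 1 - pb u)
        * ∏ j ∈ Finset.univ.erase u, (if B j then pb j else 1 - pb j) := by
  rw [probSeq, ← Finset.mul_prod_erase Finset.univ _ (Finset.mem_univ u)]
  simp only [Function.update_self]
  congr 1
  refine Finset.prod_congr rfl fun j hj => ?_
  rw [Function.update_of_ne (Finset.ne_of_mem_erase hj)]

lemma probSeq_split (l : ℕ) (pb : Fin l → ℝ) (B : Fin l → Bool) (u : Fin l) :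
    probSeq l pb B
      = (if B u then pb u else 1 - pb u)
        * ∏ j ∈ Finset.univ.erase u, (if B j then pb j else 1 - pb j) := by
  conv_lhs => rw [← Function.update_eq_self u B]
  exact probSeq_update l pb B u (B u)

lemma flip_formula (l : ℕ) (pb : Fin l → ℝ) (hpb : ∀ j, 0 < pb j ∧ pb j < 1)
    (B : Fin l → Bool) (u : Fin l) (hu : u ∉ flipSet l pb B) :
    probSeq l pb (Function.update B u (!B u)) = flipRatio l pb u * probSeq l pb B := by
  have hBu : B u = initSeq l pb u := by
    by_contra h; exact hu (Finset.mem_filter.mpr ⟨Finset.mem_univ u, h⟩)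
  obtain ⟨h1, h2⟩ := hpb u
  rw [probSeq_update, probSeq_split l pb B u, flipRatio]
  by_cases h : pb u > 1 / 2
  · have hB : B u = true := by rw [hBu]; simp [initSeq]; linarith
    rw [hB]
    rw [min_eq_right (by linarith), max_eq_left (by linarith)]
    have : pb u ≠ 0 := ne_of_gt h1
    simp only [Bool.not_true, Bool.not_false, Bool.false_eq_true, ↓reduceIte]
    field_simp
  · have hB : B u = false := by rw [hBu]; simp [initSeq]; push_neg at h; linarith
    rw [hB]
    rw [min_eq_left (by linarith), max_eq_right (by linarith)]
    have : (1 : ℝ) - pb u ≠ 0 := by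
      push_neg at h; intro hc; rw [sub_eq_zero] at hc; rw [← hc] at h; norm_num at h
    simp only [Bool.not_true, Bool.not_false, Bool.false_eq_true, ↓reduceIte]
    field_simp

lemma factor_le_init {l : ℕ} {pb : Fin l → ℝ} (hpb : ∀ j, 0 < pb j ∧ pb j < 1)
    (B : Fin l → Bool) (j : Fin l) :
    (if B j then pb j else 1 - pb j) ≤ (if initSeq l pb j then pb j else 1 - pb j) := by
  obtain ⟨h1, h2⟩ := hpb j
  by_cases h : pb j > 1 / 2
  · have hi : initSeq l pb j = true := by simp [initSeq]; linarith
    rw [hi]; by_cases hb : B j <;> simp [hb] <;> linarith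
  · have hi : initSeq l pb j = false := by simp [initSeq]; push_neg at h; linarith
    rw [hi]; by_cases hb : B j <;> simp [hb] <;> push_neg at h <;> linarith

/-- correctness of the successor-based search: the maximum of `P` over
sequences not in `S` is attained on the set of one-flip successors of elements of `S`,
and each such successor's probability is `V u * P(B)`. -/
theorem succ_search_correct (l : ℕ) (pb : Fin l → ℝ)
    (hpb : ∀ j, 0 < pb j ∧ pb j < 1)
    (hinj : Function.Injective (probSeq l pb))
    (S : Finset (Fin l → Bool)) (hne : S.Nonempty) (hproper : S ≠ Finset.univ)
    (htop : ∀ B ∈ S, ∀ B' ∉ S, probSeq l pb B' < probSeq l pb B) :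
    ∃ hT : (succSet l pb S).Nonempty,
      Sᶜ.sup'
          (by simpa [Finset.compl_eq_empty_iff, Finset.nonempty_iff_ne_empty] using hproper)
          (probSeq l pb) =
        (succSet l pb S).sup' hT (probSeq l pb) ∧
      ∀ B ∈ S, ∀ u ∉ flipSet l pb B,
        probSeq l pb (Function.update B u (!B u)) = flipRatio l pb u * probSeq l pb B := by
  have hSc : Sᶜ.Nonempty := by
    simpa [Finset.compl_eq_empty_iff, Finset.nonempty_iff_ne_empty] using hproper
  obtain ⟨C, hCmem, hCeq⟩ := Finset.exists_mem_eq_sup' hSc (probSeq l pb)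
  have hCnot : C ∉ S := Finset.mem_compl.mp hCmem
  have hCmax : ∀ D ∉ S, probSeq l pb D ≤ probSeq l pb C := by
    intro D hD
    rw [← hCeq]
    exact Finset.le_sup' _ (Finset.mem_compl.mpr hD)
  -- the initial sequence is in S
  have hinit : initSeq l pb ∈ S := by
    by_contra h
    obtain ⟨B, hB⟩ := hne
    have h1 := htop B hB _ h
    have h2 : probSeq l pb B ≤ probSeq l pb (initSeq l pb) := by
      refine Finset.prod_le_prod (fun j _ => le_of_lt (factor_pos hpb B j))
        (fun j _ => factor_le_init hpb B j)
    linarith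
  have hCne : C ≠ initSeq l pb := fun h => hCnot (h ▸ hinit)
  obtain ⟨u, hu⟩ := Function.ne_iff.mp hCne
  set B := Function.update C u (!C u) with hBdef
  have hBu : B u = !C u := Function.update_self u (!C u) C
  have hBne : B ≠ C := fun h => by
    have h2 : B u = C u := congrFun h u
    rw [hBu] at h2
    exact Bool.not_ne_self (C u) h2
  have hle : probSeq l pb C ≤ probSeq l pb B := by
    rw [probSeq_split l pb C u, hBdef, probSeq_update]
    apply mul_le_mul_of_nonneg_right
    · obtain ⟨h1, h2⟩ := hpb u
      by_cases h : pb u > 1 / 2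
      · have hi : initSeq l pb u = true := by simp [initSeq]; linarith
        have hcu : C u = false := by
          cases hc : C u
          · rfl
          · exact absurd (hc.trans hi.symm) hu
        rw [hcu]; simp; linarith
      · have hi : initSeq l pb u = false := by simp [initSeq]; push_neg at h; linarith
        have hcu : C u = true := by
          cases hc : C u
          · exact absurd (hc.trans hi.symm) hu
          · rfl
        rw [hcu]; simp; push_neg at h; linarith
    · exact le_of_lt (Finset.prod_pos fun j _ => factor_pos hpb C j)
  have hlt : probSeq l pb C < probSeq l pb B :=
    lt_of_le_of_ne hle (fun h => hBne (hinj h.symm))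
  have hBS : B ∈ S := by
    by_contra h
    exact absurd (hCmax B h) (not_le.mpr hlt)
  have huB : u ∉ flipSet l pb B := by
    intro hmem
    have h := (Finset.mem_filter.mp hmem).2
    rw [hBu] at h
    cases hc : C u <;> cases hi : initSeq l pb u <;> simp_all
  have hCeq2 : C = Function.update B u (!B u) := by
    simp only [hBdef, Function.update_self, Bool.not_not, Function.update_idem,
      Function.update_eq_self]
  have hCT : C ∈ succSet l pb S :=
    Finset.mem_filter.mpr ⟨Finset.mem_univ C, hCnot, B, hBS, u, huB, hCeq2⟩
  refine ⟨⟨C, hCT⟩, ?_, fun B hB u hu => flip_formula l pb hpb B u hu⟩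
  apply le_antisymm
  · rw [hCeq]
    exact Finset.le_sup' _ hCT
  · apply Finset.sup'_le
    intro D hD
    have hDnot : D ∉ S := (Finset.mem_filter.mp hD).2.1
    rw [hCeq]
    exact hCmax D hDnot
end
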